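/- arXiv:1907.01222 — 3 statements merged into one kernel-verified Lean document; each statement's English description precedes it below -/
import Mathlib

section
/- (Sylvester) For a numerical semigroup S = ⟨a, b⟩ generated by two coprime integers a, b ≥ 2, S is symmetric: the number of gaps equals (f(S)+1)/2 where f(S) = ab - a - b, i.e., g(S) = (a-1)(b-1)/2. -/
/-- Sylvester: `S = ⟨a,b⟩` with `a,b ≥ 2` coprime is symmetric:
`f(S) = ab - a - b` and `g(S) = (a-1)(b-1)/2`. -/
theorem sylvester (a b : ℤ) (ha : 2 ≤ a) (hb : 2 ≤ b) (hco : IsCoprime a b)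
    (S : Set ℤ)
    (hS : S = {n : ℤ | ∃ l m : ℕ, n = (l : ℤ) * a + (m : ℤ) * b}) :
    IsGreatest {n : ℤ | 0 ≤ n ∧ n ∉ S} (a * b - a - b) ∧
    2 * ({n : ℤ | 0 ≤ n ∧ n ∉ S}.ncard : ℤ) = (a - 1) * (b - 1) := by
  have ha0 : (0:ℤ) < a := by linarith
  have hb0 : (0:ℤ) < b := by linarith
  set f : ℤ := a * b - a - b with hf
  have hf0 : 0 ≤ f := by nlinarith
  obtain ⟨u, v, huv⟩ := hco
  have memS : ∀ n : ℤ, n ∈ S ↔ ∃ x y : ℤ, 0 ≤ x ∧ 0 ≤ y ∧ n = x * a + y * b := by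
    intro n
    rw [hS]
    constructor
    · rintro ⟨l, m, rfl⟩
      exact ⟨l, m, Int.natCast_nonneg l, Int.natCast_nonneg m, rfl⟩
    · rintro ⟨x, y, hx, hy, rfl⟩
      exact ⟨x.toNat, y.toNat, by rw [Int.toNat_of_nonneg hx, Int.toNat_of_nonneg hy]⟩
  have repr : ∀ n : ℤ, ∃ x y : ℤ, 0 ≤ x ∧ x < b ∧ n = x * a + y * b := by
    intro n
    refine ⟨(n * u) % b, (n * u) / b * a + n * v,
      Int.emod_nonneg _ (by linarith), Int.emod_lt_of_pos _ hb0, ?_⟩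
    have h := Int.emod_add_mul_ediv (n * u) b
    linear_combination (-n) * huv + (-a) * h
  have uniq : ∀ x₁ y₁ x₂ y₂ : ℤ, 0 ≤ x₁ → x₁ < b → 0 ≤ x₂ → x₂ < b →
      x₁ * a + y₁ * b = x₂ * a + y₂ * b → x₁ = x₂ ∧ y₁ = y₂ := by
    intro x₁ y₁ x₂ y₂ h1 h1' h2 h2' heq
    have hco' : IsCoprime b a := ⟨v, u, by linarith⟩
    have hdvd : b ∣ (x₁ - x₂) := by
      have hd : b ∣ (x₁ - x₂) * a := ⟨y₂ - y₁, by ring_nf; nlinarith⟩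
      exact hco'.dvd_of_dvd_mul_right hd
    rcases hdvd with ⟨k, hk⟩
    have hk0 : k = 0 := by nlinarith
    have hx : x₁ = x₂ := by rw [hk0, mul_zero] at hk; linarith
    subst hx
    refine ⟨rfl, ?_⟩
    have hy : y₁ * b = y₂ * b := by linarith
    exact mul_right_cancel₀ (by linarith) hy
  have memS_canon : ∀ n x y : ℤ, 0 ≤ x → x < b → n = x * a + y * b → (n ∈ S ↔ 0 ≤ y) := by
    intro n x y hx hxb hn
    rw [memS]
    constructor
    · rintro ⟨x', y', hx', hy', hn'⟩
      have h := Int.emod_add_mul_ediv x' b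
      have hn'' : x * a + y * b = (x' % b) * a + (x' / b * a + y') * b := by
        linear_combination (-1 : ℤ) * hn + hn' + (-a) * h
      obtain ⟨hxeq, hyeq⟩ := uniq x y (x' % b) (x' / b * a + y') hx hxb
        (Int.emod_nonneg _ (by linarith)) (Int.emod_lt_of_pos _ hb0) hn''
      have hq : 0 ≤ x' / b := Int.ediv_nonneg hx' hb0.le
      rw [hyeq]
      positivity
    · intro hy
      exact ⟨x, y, hx, hy, hn⟩
  have symm : ∀ n : ℤ, (f - n ∈ S ↔ n ∉ S) := by
    intro n
    obtain ⟨x, y, hx, hxb, hn⟩ := repr n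
    have h1 : f - n = (b - 1 - x) * a + (-1 - y) * b := by rw [hf, hn]; ring
    rw [memS_canon (f - n) (b - 1 - x) (-1 - y) (by linarith) (by linarith) h1,
      memS_canon n x y hx hxb hn]
    constructor
    · intro h hy; linarith
    · intro h; by_contra h'; push_neg at h'; exact h (by linarith)
  set G : Set ℤ := {n : ℤ | 0 ≤ n ∧ n ∉ S} with hG
  have hGsub : G ⊆ Set.Icc 0 f := by
    rintro n ⟨hn0, hnS⟩
    refine ⟨hn0, ?_⟩
    obtain ⟨x, y, hx, hxb, hn⟩ := repr n
    have hy : y ≤ -1 := by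
      by_contra h'; push_neg at h'
      exact hnS ((memS_canon n x y hx hxb hn).mpr (by linarith))
    rw [hn, hf]; nlinarith
  have hIfin : (Set.Icc (0:ℤ) f).Finite := Set.finite_Icc _ _
  have hGfin : G.Finite := hIfin.subset hGsub
  -- f is not in S
  have hfS : f ∉ S := by
    rw [← sub_zero f, symm 0]
    intro h
    apply h
    rw [memS]
    exact ⟨0, 0, le_refl 0, le_refl 0, by ring⟩
  constructor
  · exact ⟨⟨hf0, hfS⟩, fun n hn => (hGsub hn).2⟩
  · -- counting
    have himg : (fun n => f - n) '' G = Set.Icc 0 f \ G := by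
      ext m
      constructor
      · rintro ⟨n, ⟨hn0, hnS⟩, rfl⟩
        have hnf : n ≤ f := (hGsub ⟨hn0, hnS⟩).2
        have hmS : f - n ∈ S := (symm n).mpr hnS
        have hbeta : (fun n => f - n) n = f - n := rfl
        rw [hbeta]
        exact ⟨⟨by linarith, by linarith⟩, fun hm => hm.2 hmS⟩
      · rintro ⟨⟨hm0, hmf⟩, hmG⟩
        have hmS : m ∈ S := by
          by_contra h
          exact hmG ⟨hm0, h⟩
        refine ⟨f - m, ⟨by linarith, ?_⟩, by ring⟩
        rw [← symm (f - m)]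
        simpa using hmS
    have hinj : Function.Injective (fun n : ℤ => f - n) := fun x y h => by
      simpa using sub_right_injective h
    have hcard1 : ((fun n => f - n) '' G).ncard = G.ncard :=
      Set.ncard_image_of_injective G hinj
    have hcard2 : (Set.Icc 0 f \ G).ncard + G.ncard = (Set.Icc (0:ℤ) f).ncard :=
      Set.ncard_diff_add_ncard_of_subset hGsub hIfin
    have hIcc : (Set.Icc (0:ℤ) f).ncard = (f + 1).toNat := by
      rw [← Finset.coe_Icc, Set.ncard_coe_finset, Int.card_Icc]
      congr 1
      omega
    have h2 : 2 * G.ncard = (f + 1).toNat := by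
      rw [← hIcc, ← hcard2, ← himg, hcard1]
      ring
    have := congrArg (fun n : ℕ => (n : ℤ)) h2
    push_cast at this
    rw [Int.toNat_of_nonneg (by linarith)] at this
    rw [this, hf]
    ring
end

section
/- Let S = ⟨a₁,...,a_k⟩ with a₁ < ... < a_k and gcd 1, S ≠ ℤ≥0. Then g(S) = (f(S)+1)/2 if and only if the type set T(S) = {m ∈ Ap(S,a_k) : m + a_i ∉ Ap(S,a_k) for all i} has exactly one element. -/
/-- `g(S) = (f(S)+1)/2` iff the type set `T(S)` has exactly one element. -/
theorem gorenstein_iff_type_one (k : ℕ) (a : Fin (k + 1) → ℤ)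
    (hmono : StrictMono a) (hpos : ∀ i, 1 ≤ a i)
    (hgcd : Finset.univ.gcd a = 1)
    (S : Set ℤ)
    (hS : S = {n : ℤ | ∃ l : Fin (k + 1) → ℕ, n = ∑ i, (l i : ℤ) * a i})
    (hne : S ≠ {n : ℤ | 0 ≤ n})
    (hfin : {n : ℤ | 0 ≤ n ∧ n ∉ S}.Finite)
    (f : ℤ) (hf : IsGreatest {n : ℤ | 0 ≤ n ∧ n ∉ S} f) :
    2 * ({n : ℤ | 0 ≤ n ∧ n ∉ S}.ncard : ℤ) = f + 1 ↔
    ∃! m : ℤ, (m ∈ S ∧ m - a (Fin.last k) ∉ S) ∧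
      ∀ i : Fin (k + 1),
        ¬ (m + a i ∈ S ∧ (m + a i) - a (Fin.last k) ∉ S) := by
  classical
  have hmem : ∀ n : ℤ, n ∈ S ↔ ∃ l : Fin (k + 1) → ℕ, n = ∑ i, (l i : ℤ) * a i := by
    intro n; rw [hS]; exact Iff.rfl
  have zero_mem : (0 : ℤ) ∈ S := (hmem 0).2 ⟨0, by simp⟩
  have gen_mem : ∀ j, a j ∈ S := by
    intro j
    refine (hmem _).2 ⟨fun i => if i = j then 1 else 0, ?_⟩
    rw [Finset.sum_eq_single j (fun b _ hb => by simp [hb]) (by simp)]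
    simp
  have add_mem : ∀ x ∈ S, ∀ y ∈ S, x + y ∈ S := by
    intro x hx y hy
    obtain ⟨lx, rfl⟩ := (hmem x).1 hx
    obtain ⟨ly, rfl⟩ := (hmem y).1 hy
    refine (hmem _).2 ⟨fun i => lx i + ly i, ?_⟩
    rw [← Finset.sum_add_distrib]
    push_cast
    congr 1; ext i; ring
  have nonneg : ∀ x ∈ S, (0:ℤ) ≤ x := by
    intro x hx; obtain ⟨l, rfl⟩ := (hmem x).1 hx
    exact Finset.sum_nonneg fun i _ =>
      mul_nonneg (Int.natCast_nonneg _) (le_trans zero_le_one (hpos i))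
  have decomp : ∀ s ∈ S, s ≠ 0 → ∃ j, s - a j ∈ S := by
    intro s hs hs0
    obtain ⟨l, rfl⟩ := (hmem s).1 hs
    have hex : ∃ j, l j ≠ 0 := by
      by_contra h; push_neg at h
      exact hs0 (by simp [h])
    obtain ⟨j, hj⟩ := hex
    refine ⟨j, (hmem _).2 ⟨fun i => l i - (if i = j then 1 else 0), ?_⟩⟩
    have hcast : ∀ i, ((l i - (if i = j then 1 else 0) : ℕ) : ℤ)
        = (l i : ℤ) - (if i = j then 1 else 0) := by
      intro i
      by_cases h : i = j
      · subst h
        rw [if_pos rfl, if_pos rfl, Nat.cast_sub (Nat.one_le_iff_ne_zero.2 hj)]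
        norm_num
      · simp [h]
    calc (∑ i, (l i : ℤ) * a i) - a j
        = ∑ i, ((l i : ℤ) * a i - (if i = j then 1 else 0) * a i) := by
          rw [Finset.sum_sub_distrib]
          congr 1
          rw [Finset.sum_eq_single j (fun b _ hb => by simp [hb]) (by simp)]
          simp
      _ = ∑ i, ((l i - (if i = j then 1 else 0) : ℕ) : ℤ) * a i := by
          congr 1; ext i; rw [hcast i]; ring
  have hf0 : 0 ≤ f := hf.1.1
  have hfS : f ∉ S := hf.1.2
  have hbound : ∀ n : ℤ, 0 ≤ n → n ∉ S → n ≤ f := fun n h1 h2 => hf.2 ⟨h1, h2⟩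
  have large : ∀ n : ℤ, f < n → n ∈ S := by
    intro n hn
    by_contra h
    exact absurd (hbound n (by omega) h) (by omega)
  -- pseudo-Frobenius predicate
  set P : ℤ → Prop := fun x => x ∉ S ∧ ∀ i, x + a i ∈ S with hP
  have key : ∀ x, P x → ∀ s ∈ S, s ≠ 0 → x + s ∈ S := by
    intro x hx s hs hs0
    obtain ⟨j, hj⟩ := decomp s hs hs0
    have := add_mem _ (hx.2 j) _ hj
    have he : x + a j + (s - a j) = x + s := by ring
    rwa [he] at this
  have Pf : P f := ⟨hfS, fun i => large _ (by linarith [hpos i])⟩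
  have Pfx : ∀ x, P x → x ≠ f → f - x ∉ S := by
    intro x hx hxf hmemfx
    have h0 : f - x ≠ 0 := by omega
    have := key x hx _ hmemfx h0
    rw [add_sub_cancel] at this
    exact hfS this
  have Ple : ∀ x, P x → x ≤ f := by
    intro x hx
    by_contra h
    exact hx.1 (large x (by omega))
  have Pge : ∀ x, P x → 0 ≤ x := by
    intro x hx
    by_contra h
    have h1 : f - x ∈ S := large _ (by omega)
    exact Pfx x hx (by omega) h1
  -- symmetry
  have claimA : (∀ x, P x → x = f) → ∀ x : ℤ, 0 ≤ x → x ∉ S → f - x ∈ S := by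
    intro h1
    have main : ∀ n : ℕ, ∀ x : ℤ, (f - x).toNat ≤ n → 0 ≤ x → x ∉ S → f - x ∈ S := by
      intro n
      induction n with
      | zero =>
        intro x hx h0 hxS
        have hxf : x ≤ f := hbound x h0 hxS
        have : f - x = 0 := by omega
        rw [this]; exact zero_mem
      | succ n ih =>
        intro x hx h0 hxS
        by_cases hPx : P x
        · rw [h1 x hPx, sub_self]; exact zero_mem
        · have hex : ∃ i, x + a i ∉ S := by
            rw [hP] at hPx
            simp only [not_and, not_forall] at hPx
            exact hPx hxS
          obtain ⟨i, hi⟩ := hex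
          have ha : 1 ≤ a i := hpos i
          have h0' : 0 ≤ x + a i := by omega
          have hfx : x + a i ≤ f := hbound _ h0' hi
          have hrec := ih (x + a i) (by omega) h0' hi
          have := add_mem _ hrec _ (gen_mem i)
          have he : f - (x + a i) + a i = f - x := by ring
          rwa [he] at this
    intro x h0 hxS
    exact main (f - x).toNat x le_rfl h0 hxS
  have claimB : (∀ x : ℤ, 0 ≤ x → x ∉ S → f - x ∈ S) → ∀ x, P x → x = f := by
    intro hs x hx
    by_contra hne'
    exact Pfx x hx hne' (hs x (Pge x hx) hx.1)
  -- counting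
  set G : Finset ℤ := (Finset.Icc 0 f).filter (fun n => n ∉ S) with hG
  set A : Finset ℤ := (Finset.Icc 0 f).filter (fun n => n ∈ S) with hA
  have hcard : A.card + G.card = (f + 1).toNat := by
    rw [hG, hA, Finset.card_filter_add_card_filter_not, Int.card_Icc]
    norm_num
  have hset : {n : ℤ | 0 ≤ n ∧ n ∉ S} = ↑G := by
    ext n
    simp only [hG, Set.mem_setOf_eq, Finset.coe_filter, Finset.mem_Icc]
    constructor
    · rintro ⟨h1, h2⟩; exact ⟨⟨h1, hbound n h1 h2⟩, h2⟩
    · rintro ⟨⟨h1, _⟩, h2⟩; exact ⟨h1, h2⟩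
  have hncard : ({n : ℤ | 0 ≤ n ∧ n ∉ S}.ncard : ℤ) = (G.card : ℤ) := by
    rw [hset, Set.ncard_coe_finset]
  have hmapsAG : ∀ x ∈ A, f - x ∈ G := by
    intro x hx
    rw [hA, Finset.mem_filter, Finset.mem_Icc] at hx
    obtain ⟨⟨h1, h2⟩, h3⟩ := hx
    rw [hG, Finset.mem_filter, Finset.mem_Icc]
    refine ⟨⟨by omega, by omega⟩, fun hc => ?_⟩
    have := add_mem _ h3 _ hc
    rw [add_sub_cancel] at this
    exact hfS this
  have himgA : A.image (fun x => f - x) ⊆ G := by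
    intro y hy
    simp only [Finset.mem_image] at hy
    obtain ⟨x, hx, rfl⟩ := hy
    exact hmapsAG x hx
  have hinjf : Function.Injective (fun x : ℤ => f - x) := by
    intro x y h; simp only at h; omega
  have hALE : A.card ≤ G.card := by
    calc A.card = (A.image (fun x => f - x)).card := (Finset.card_image_of_injective _ hinjf).symm
      _ ≤ G.card := Finset.card_le_card himgA
  have hz : (G.card : ℤ) + (A.card : ℤ) = f + 1 := by
    have := hcard; omega
  -- equivalence between the m-form and P-form of type-one
  have hQP : ∀ m : ℤ, ((m ∈ S ∧ m - a (Fin.last k) ∉ S) ∧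
      ∀ i : Fin (k + 1), ¬ (m + a i ∈ S ∧ (m + a i) - a (Fin.last k) ∉ S))
      ↔ P (m - a (Fin.last k)) := by
    intro m
    constructor
    · rintro ⟨⟨hm, hmk⟩, hall⟩
      refine ⟨hmk, fun i => ?_⟩
      have h1 : m + a i ∈ S := add_mem _ hm _ (gen_mem i)
      have h2 : (m + a i) - a (Fin.last k) ∈ S := by
        by_contra hc
        exact hall i ⟨h1, hc⟩
      have he : m - a (Fin.last k) + a i = m + a i - a (Fin.last k) := by ring
      rwa [he]
    · rintro ⟨h1, h2⟩
      have hm : m ∈ S := by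
        have := h2 (Fin.last k)
        rwa [sub_add_cancel] at this
      refine ⟨⟨hm, h1⟩, fun i hc => ?_⟩
      have := h2 i
      have he : m - a (Fin.last k) + a i = m + a i - a (Fin.last k) := by ring
      rw [he] at this
      exact hc.2 this
  have hexu : (∀ x, P x → x = f) ↔ (∃! m : ℤ, (m ∈ S ∧ m - a (Fin.last k) ∉ S) ∧
      ∀ i : Fin (k + 1), ¬ (m + a i ∈ S ∧ (m + a i) - a (Fin.last k) ∉ S)) := by
    constructor
    · intro h
      refine ⟨f + a (Fin.last k), (hQP _).2 (by rwa [add_sub_cancel_right]), ?_⟩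
      intro m hm
      have := h _ ((hQP m).1 hm)
      omega
    · rintro ⟨m₀, hm₀, huniq⟩ x hx
      have h1 : x + a (Fin.last k) = m₀ := huniq _ ((hQP _).2 (by rwa [add_sub_cancel_right]))
      have h2 : f + a (Fin.last k) = m₀ := huniq _ ((hQP _).2 (by rwa [add_sub_cancel_right]))
      omega
  rw [hncard, ← hexu]
  constructor
  · -- 2g = f+1 → type one
    intro hcount
    apply claimB
    have hcards : G.card = A.card := by omega
    have hGimg : G = A.image (fun x => f - x) := by
      refine (Finset.eq_of_subset_of_card_le himgA ?_).symm
      rw [Finset.card_image_of_injective _ hinjf]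
      omega
    intro x h0 hxS
    have hx : x ∈ G := by
      rw [hG, Finset.mem_filter, Finset.mem_Icc]
      exact ⟨⟨h0, hbound x h0 hxS⟩, hxS⟩
    rw [hGimg, Finset.mem_image] at hx
    obtain ⟨z, hz', hze⟩ := hx
    rw [hA, Finset.mem_filter] at hz'
    have : f - x = z := by omega
    rw [this]
    exact hz'.2
  · -- type one → 2g = f+1
    intro h
    have hsym := claimA h
    have hmapsGA : ∀ x ∈ G, f - x ∈ A := by
      intro x hx
      rw [hG, Finset.mem_filter, Finset.mem_Icc] at hx
      obtain ⟨⟨h1, h2⟩, h3⟩ := hx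
      rw [hA, Finset.mem_filter, Finset.mem_Icc]
      exact ⟨⟨by omega, by omega⟩, hsym x h1 h3⟩
    have hGLE : G.card ≤ A.card := by
      calc G.card = (G.image (fun x => f - x)).card :=
            (Finset.card_image_of_injective _ hinjf).symm
        _ ≤ A.card := Finset.card_le_card (by
            intro y hy
            simp only [Finset.mem_image] at hy
            obtain ⟨x, hx, rfl⟩ := hy
            exact hmapsGA x hx)
    omega
end

section
/- Let S ⊆ ℤ^d be an affine monoid generated by nonzero elements a₁,...,a_k and let Λ ⊆ {a₁,...,a_k} be such that the rational cones satisfy pos(S) = pos(Λ). Then the Apéry set Ap(S,Λ) = {a ∈ S : a - b ∉ S for all b ∈ Λ} is finite. -/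
/-- For a pointed affine monoid `S ⊆ ℤ^d` generated by nonzero `a₁,...,a_k` and
`Λ ⊆ {a₁,...,a_k}` with `pos(S) = pos(Λ)`, the Apéry set
`Ap(S,Λ) = {a ∈ S : a - b ∉ S for all b ∈ Λ}` is finite. -/
theorem apery_affine_finite (d k : ℕ) (a : Fin k → (Fin d → ℤ))
    (hanz : ∀ i, a i ≠ 0)
    (Λ : Finset (Fin k))
    (S : Set (Fin d → ℤ))
    (hS : S = {v : Fin d → ℤ | ∃ l : Fin k → ℕ, v = ∑ i, (l i : ℤ) • a i})
    (hpointed : ∀ x ∈ S, -x ∈ S → x = 0)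
    (hcone : ∀ i : Fin k, ∃ μ : Fin k → ℚ, (∀ j, 0 ≤ μ j) ∧
        (∀ j, j ∉ Λ → μ j = 0) ∧
        (fun t => (a i t : ℚ)) = ∑ j, μ j • (fun t => (a j t : ℚ))) :
    {x ∈ S | ∀ b ∈ Λ, x - a b ∉ S}.Finite := by
  classical
  -- Step 1: for each generator, a positive multiple lies in the submonoid generated by Λ.
  have key : ∀ i : Fin k, ∃ (N : ℕ) (m : Fin k → ℕ), 0 < N ∧ (∀ j, j ∉ Λ → m j = 0) ∧
      (∀ t, (N : ℤ) * a i t = ∑ j, (m j : ℤ) * a j t) ∧ ∃ j ∈ Λ, 0 < m j := by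
    intro i
    obtain ⟨μ, hμ0, hμΛ, hμeq⟩ := hcone i
    set N : ℕ := ∏ j, (μ j).den with hNdef
    have hNpos : 0 < N := Finset.prod_pos (fun j _ => (μ j).pos)
    have hint : ∀ j, ∃ n : ℕ, (n : ℚ) = μ j * N := by
      intro j
      have hd : ((μ j).den : ℕ) ∣ N := Finset.dvd_prod_of_mem _ (Finset.mem_univ j)
      obtain ⟨c, hc⟩ := hd
      have hmd : μ j * ((μ j).den : ℚ) = ((μ j).num : ℚ) := by
        have hden : ((μ j).den : ℚ) ≠ 0 := by exact_mod_cast (μ j).den_nz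
        have h := Rat.num_div_den (μ j)
        rw [div_eq_iff hden] at h
        exact h.symm
      have hveq : μ j * N = (((μ j).num * c : ℤ) : ℚ) := by
        rw [hc]
        push_cast
        calc μ j * (((μ j).den : ℚ) * c) = (μ j * ((μ j).den : ℚ)) * c := by ring
          _ = ((μ j).num : ℚ) * c := by rw [hmd]
      have hnn : (0:ℚ) ≤ μ j * N := mul_nonneg (hμ0 j) (by positivity)
      rw [hveq] at hnn
      have hnn' : (0:ℤ) ≤ (μ j).num * c := by exact_mod_cast hnn
      refine ⟨((μ j).num * c).toNat, ?_⟩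
      rw [hveq]
      exact_mod_cast congrArg (fun z : ℤ => (z : ℚ)) (Int.toNat_of_nonneg hnn')
    choose n hn using hint
    have hsum : ∀ t, (N:ℚ) * (a i t : ℚ) = ∑ j, (n j : ℚ) * (a j t : ℚ) := by
      intro t
      have h0 := congrFun hμeq t
      simp only [Finset.sum_apply, Pi.smul_apply, smul_eq_mul] at h0
      calc (N:ℚ) * (a i t : ℚ) = (∑ j, μ j * (a j t : ℚ)) * N := by rw [← h0]; ring
        _ = ∑ j, (n j : ℚ) * (a j t : ℚ) := by
            rw [Finset.sum_mul]
            refine Finset.sum_congr rfl (fun j _ => ?_)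
            rw [hn]; ring
    refine ⟨N, n, hNpos, ?_, ?_, ?_⟩
    · intro j hj
      have := hn j
      rw [hμΛ j hj, zero_mul] at this
      exact_mod_cast this
    · intro t; exact_mod_cast hsum t
    · by_contra h
      push_neg at h
      have hall : ∀ j, n j = 0 := by
        intro j
        by_cases hj : j ∈ Λ
        · exact Nat.le_zero.mp (h j hj)
        · have := hn j; rw [hμΛ j hj, zero_mul] at this; exact_mod_cast this
      apply hanz i
      funext t
      have ht : (N:ℚ) * (a i t : ℚ) = 0 := by
        rw [hsum t]; simp [hall]
      have hN0 : (N:ℚ) ≠ 0 := by exact_mod_cast hNpos.ne'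
      have : (a i t : ℚ) = 0 := by
        rcases mul_eq_zero.mp ht with h1 | h1
        · exact absurd h1 hN0
        · exact h1
      exact_mod_cast this
  choose N m hNpos hsupp heq hexists using key
  -- Step 2: the Apéry set is contained in a finite set of bounded combinations.
  set f : (∀ i : Fin k, Fin (N i)) → (Fin d → ℤ) :=
    fun l => ∑ i, ((l i : ℕ) : ℤ) • a i with hf
  apply Set.Finite.subset (Set.finite_range f)
  rintro x ⟨hxS, hap⟩
  rw [hS] at hxS
  obtain ⟨l, hl⟩ := hxS
  have hlt : ∀ i, l i < N i := by
    by_contra hcon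
    push_neg at hcon
    obtain ⟨i, hi⟩ := hcon
    obtain ⟨j, hjΛ, hj⟩ := hexists i
    apply hap j hjΛ
    rw [hS]
    refine ⟨fun t => (l t - if t = i then N i else 0) + (m i t - if t = j then 1 else 0), ?_⟩
    funext u
    have hc : ∀ t, (((l t - if t = i then N i else 0) + (m i t - if t = j then 1 else 0) : ℕ) : ℤ)
        = (l t : ℤ) - (if t = i then (N i : ℤ) else 0)
          + ((m i t : ℤ) - (if t = j then 1 else 0)) := by
      intro t
      split_ifs with h1 h2 <;> subst_vars <;> push_cast <;> omega
    have hx : x u = ∑ t, (l t : ℤ) * a t u := by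
      rw [hl]; simp [Finset.sum_apply]
    have hm : (N i : ℤ) * a i u = ∑ t, (m i t : ℤ) * a t u := heq i u
    have hI : ∑ t, (if t = i then (N i : ℤ) else 0) * a t u = (N i : ℤ) * a i u := by
      simp [ite_mul]
    have hJ : ∑ t, (if t = j then (1 : ℤ) else 0) * a t u = a j u := by
      simp [ite_mul]
    simp only [Finset.sum_apply, Pi.smul_apply, smul_eq_mul, hc, Pi.sub_apply]
    have hexp : ∑ t, ((l t : ℤ) - (if t = i then (N i : ℤ) else 0)
          + ((m i t : ℤ) - (if t = j then 1 else 0))) * a t u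
        = (∑ t, (l t : ℤ) * a t u) - (∑ t, (if t = i then (N i : ℤ) else 0) * a t u)
          + ((∑ t, (m i t : ℤ) * a t u) - ∑ t, (if t = j then (1:ℤ) else 0) * a t u) := by
      simp only [sub_mul, add_mul, Finset.sum_add_distrib, Finset.sum_sub_distrib]
    rw [hexp, hI, hJ, ← hm, ← hx]
    ring
  refine ⟨fun i => ⟨l i, hlt i⟩, ?_⟩
  simp only [hf]
  exact hl.symm
end
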